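/- Whitehead's lemma (finite stable form): Let A be a unital ring and let X, Y be invertible n × n matrices over A. Then the 2n × 2n block diagonal matrix fromBlocks(X·Y·X⁻¹·Y⁻¹, 0; 0, 1) is a product of elementary matrices, i.e. there is a finite list of transvections 1 + c·E_{uv} (u ≠ v, c ∈ A) over the index set Fin n ⊕ Fin n whose product equals fromBlocks(X·Y·X⁻¹·Y⁻¹, 0; 0, 1). -/

import Mathlib

open Matrix

section Aux

variable {A : Type*} [Ring A] {n : ℕ}

/-- Auxiliary predicate: `M` is a product of elementary transvections. -/
def IsElemProdW (M : Matrix (Fin n ⊕ Fin n) (Fin n ⊕ Fin n) A) : Prop :=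
  ∃ L : List (Matrix (Fin n ⊕ Fin n) (Fin n ⊕ Fin n) A),
    (∀ N ∈ L, ∃ (u v : Fin n ⊕ Fin n) (c : A), u ≠ v ∧
      N = 1 + Matrix.single u v c) ∧
    L.prod = M

lemma IsElemProdW.mul {M N : Matrix (Fin n ⊕ Fin n) (Fin n ⊕ Fin n) A}
    (hM : IsElemProdW M) (hN : IsElemProdW N) : IsElemProdW (M * N) := by
  obtain ⟨L1, h1, e1⟩ := hM
  obtain ⟨L2, h2, e2⟩ := hN
  refine ⟨L1 ++ L2, ?_, by simp [List.prod_append, e1, e2]⟩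
  intro P hP
  rcases List.mem_append.1 hP with h | h
  · exact h1 P h
  · exact h2 P h

lemma prod_one_add_of_mul_eq_zero (l : List (Fin n × Fin n))
    (f : Fin n × Fin n → Matrix (Fin n ⊕ Fin n) (Fin n ⊕ Fin n) A)
    (hf : ∀ p q, f p * f q = 0) :
    (l.map (fun p => 1 + f p)).prod = 1 + (l.map f).sum := by
  induction l with
  | nil => simp
  | cons a l ih =>
    have hz : f a * (l.map f).sum = 0 := by
      rw [← List.sum_map_mul_left]
      simp [hf]
    simp only [List.map_cons, List.prod_cons, List.sum_cons, ih]
    rw [add_mul, one_mul, mul_add, mul_one, hz, add_zero]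
    abel

lemma sum_std_inl_inr (B : Matrix (Fin n) (Fin n) A) :
    ∑ p : Fin n × Fin n,
      single (Sum.inl p.1 : Fin n ⊕ Fin n) (Sum.inr p.2 : Fin n ⊕ Fin n) (B p.1 p.2)
      = fromBlocks 0 B 0 0 := by
  ext u v
  rcases u with i | i <;> rcases v with j | j <;>
    simp only [Matrix.sum_apply, single, of_apply, fromBlocks,
      Matrix.of_apply, Sum.elim_inl, Sum.elim_inr, Matrix.zero_apply]
  · simp
  · rw [Finset.sum_eq_single (i, j)] <;> simp_all
  · simp
  · simp

lemma sum_std_inr_inl (C : Matrix (Fin n) (Fin n) A) :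
    ∑ p : Fin n × Fin n,
      single (Sum.inr p.1 : Fin n ⊕ Fin n) (Sum.inl p.2 : Fin n ⊕ Fin n) (C p.1 p.2)
      = fromBlocks 0 0 C 0 := by
  ext u v
  rcases u with i | i <;> rcases v with j | j <;>
    simp only [Matrix.sum_apply, single, of_apply, fromBlocks,
      Matrix.of_apply, Sum.elim_inl, Sum.elim_inr, Matrix.zero_apply]
  · simp
  · simp
  · rw [Finset.sum_eq_single (i, j)] <;> simp_all
  · simp

lemma isElemProdW_upper (B : Matrix (Fin n) (Fin n) A) :
    IsElemProdW (fromBlocks 1 B 0 1) := by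
  refine ⟨(Finset.univ : Finset (Fin n × Fin n)).toList.map
      (fun p => 1 + single (Sum.inl p.1 : Fin n ⊕ Fin n) (Sum.inr p.2) (B p.1 p.2)),
      ?_, ?_⟩
  · intro N hN
    simp only [List.mem_map] at hN
    obtain ⟨p, -, hp⟩ := hN
    exact ⟨Sum.inl p.1, Sum.inr p.2, B p.1 p.2, by simp, hp.symm⟩
  · rw [prod_one_add_of_mul_eq_zero _ _
      (fun p q => Matrix.single_mul_single_of_ne _ _ _ _ (by simp) _),
      Finset.sum_map_toList, sum_std_inl_inr]
    ext u v
    rcases u with i | i <;> rcases v with j | j <;>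
      simp [fromBlocks, Matrix.one_apply]

lemma isElemProdW_lower (C : Matrix (Fin n) (Fin n) A) :
    IsElemProdW (fromBlocks 1 0 C 1) := by
  refine ⟨(Finset.univ : Finset (Fin n × Fin n)).toList.map
      (fun p => 1 + single (Sum.inr p.1 : Fin n ⊕ Fin n) (Sum.inl p.2) (C p.1 p.2)),
      ?_, ?_⟩
  · intro N hN
    simp only [List.mem_map] at hN
    obtain ⟨p, -, hp⟩ := hN
    exact ⟨Sum.inr p.1, Sum.inl p.2, C p.1 p.2, by simp, hp.symm⟩
  · rw [prod_one_add_of_mul_eq_zero _ _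
      (fun p q => Matrix.single_mul_single_of_ne _ _ _ _ (by simp) _),
      Finset.sum_map_toList, sum_std_inr_inl]
    ext u v
    rcases u with i | i <;> rcases v with j | j <;>
      simp [fromBlocks, Matrix.one_apply]

set_option maxHeartbeats 1000000 in
lemma isElemProdW_diag (M : Matrix (Fin n) (Fin n) A) [Invertible M] :
    IsElemProdW (fromBlocks M 0 0 (⅟M)) := by
  have h : (fromBlocks 1 M 0 1) * (fromBlocks 1 0 (-⅟M) 1) * (fromBlocks 1 M 0 1) *
      ((fromBlocks 1 (-1) 0 1) * (fromBlocks 1 0 1 1) * (fromBlocks 1 (-1) 0 1))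
      = fromBlocks M 0 0 (⅟M) := by
    rw [Matrix.fromBlocks_multiply, Matrix.fromBlocks_multiply, Matrix.fromBlocks_multiply,
        Matrix.fromBlocks_multiply, Matrix.fromBlocks_multiply]
    simp [Matrix.mul_neg, Matrix.neg_mul, mul_invOf_self, invOf_mul_self]
  rw [← h]
  exact ((((isElemProdW_upper M).mul (isElemProdW_lower (-⅟M))).mul
    (isElemProdW_upper M)).mul
    (((isElemProdW_upper (-1)).mul (isElemProdW_lower 1)).mul (isElemProdW_upper (-1))))

end Aux

/-- Whitehead's lemma (finite stable form): for invertible `n × n` matrices `X, Y` over a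
unital ring `A`, the `2n × 2n` block diagonal matrix `diag(X·Y·X⁻¹·Y⁻¹, 1)` is a product of
elementary matrices (transvections `1 + c·E_{uv}` with `u ≠ v`). -/
theorem whitehead_lemma_commutator_is_product_of_elementary {A : Type*} [Ring A] (n : ℕ)
    (X Y : Matrix (Fin n) (Fin n) A) [Invertible X] [Invertible Y] :
    ∃ L : List (Matrix (Fin n ⊕ Fin n) (Fin n ⊕ Fin n) A),
      (∀ M ∈ L, ∃ (u v : Fin n ⊕ Fin n) (c : A), u ≠ v ∧
        M = 1 + Matrix.single u v c) ∧
      L.prod = Matrix.fromBlocks (X * Y * ⅟X * ⅟Y) 0 0 1 := by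
  letI : Invertible (⅟X * ⅟Y) := invertibleMul _ _
  have key : Matrix.fromBlocks (X * Y * ⅟X * ⅟Y) 0 0 1 =
      Matrix.fromBlocks X 0 0 (⅟X) * Matrix.fromBlocks Y 0 0 (⅟Y) *
      Matrix.fromBlocks (⅟X * ⅟Y) 0 0 (⅟(⅟X * ⅟Y)) := by
    rw [Matrix.fromBlocks_multiply, Matrix.fromBlocks_multiply]
    simp only [Matrix.mul_zero, Matrix.zero_mul, add_zero, zero_add]
    rw [mul_invOf_self, Matrix.mul_assoc]
  rw [key]
  exact ((isElemProdW_diag X).mul (isElemProdW_diag Y)).mul (isElemProdW_diag (⅟X * ⅟Y))
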